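/- Let A be a finite-dimensional F-subspace of a field extension L/F satisfying dim(A ∩ xA) ≤ 1 for all x ∈ L \ F (a Sidon space). Then for all nonzero x, y, z, t ∈ A with xy = zt, either (Fx = Fz and Fy = Ft) or (Fx = Ft and Fy = Fz). -/

import Mathlib

open Module Submodule

theorem stmt13 {F L : Type*} [Field F] [Field L] [Algebra F L]
    (A : Submodule F L) (hfd : FiniteDimensional F ↥A)
    (hSidon : ∀ x : L, x ∉ Set.range (algebraMap F L) →
      finrank F ↥(A ⊓ A.map (LinearMap.mulLeft F x)) ≤ 1)
    (x y z t : L) (hx : x ∈ A) (hy : y ∈ A) (hz : z ∈ A) (ht : t ∈ A)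
    (hx0 : x ≠ 0) (hy0 : y ≠ 0) (hz0 : z ≠ 0) (ht0 : t ≠ 0)
    (h : x * y = z * t) :
    (span F {x} = span F {z} ∧ span F {y} = span F {t}) ∨
    (span F {x} = span F {t} ∧ span F {y} = span F {z}) := by
  set w := x * z⁻¹ with hw
  by_cases hwF : w ∈ Set.range (algebraMap F L)
  · -- x = c • z, t = c • y
    obtain ⟨c, hc⟩ := hwF
    have hc0 : c ≠ 0 := by
      rintro rfl
      simp only [map_zero] at hc
      exact hx0 (by rw [hw] at hc; simpa [hz0] using hc.symm)
    have hxz : x = c • z := by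
      have : w * z = x := by rw [hw, inv_mul_cancel_right₀ hz0]
      rw [← hc] at this
      simpa [Algebra.smul_def] using this.symm
    have hty : t = c • y := by
      have : w * y = t := by
        rw [hw]; field_simp; linear_combination h
      rw [← hc] at this
      simpa [Algebra.smul_def] using this.symm
    left
    constructor
    · rw [hxz, span_singleton_smul_eq (hc0.isUnit) z]
    · rw [hty, span_singleton_smul_eq (hc0.isUnit) y]
  · -- x, t ∈ A ⊓ wA, finrank ≤ 1
    have hxmem : x ∈ A ⊓ A.map (LinearMap.mulLeft F w) := by
      refine ⟨hx, ⟨z, hz, ?_⟩⟩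
      simp only [LinearMap.mulLeft_apply, hw]
      field_simp
    have htmem : t ∈ A ⊓ A.map (LinearMap.mulLeft F w) := by
      refine ⟨ht, ⟨y, hy, ?_⟩⟩
      simp only [LinearMap.mulLeft_apply, hw]
      field_simp
      linear_combination h
    have hle : A ⊓ A.map (LinearMap.mulLeft F w) ≤ A := inf_le_left
    haveI : FiniteDimensional F ↥(A ⊓ A.map (LinearMap.mulLeft F w)) :=
      Submodule.finiteDimensional_of_le hle
    have hrk := hSidon w hwF
    obtain ⟨v, hv⟩ := finrank_le_one_iff.mp hrk
    obtain ⟨a, ha⟩ := hv ⟨x, hxmem⟩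
    obtain ⟨b, hb⟩ := hv ⟨t, htmem⟩
    have ha' : a • (v : L) = x := congrArg Subtype.val ha
    have hb' : b • (v : L) = t := congrArg Subtype.val hb
    have ha0 : a ≠ 0 := by rintro rfl; simp at ha'; exact hx0 ha'.symm
    have htx : t = (b / a) • x := by
      rw [← ha', ← hb', smul_smul]
      congr 1
      field_simp
    have hb0 : b / a ≠ 0 := by
      intro h0
      rw [h0, zero_smul] at htx
      exact ht0 htx
    have hyz : y = (b / a) • z := by
      have : x * y = x * ((b / a) • z) := by
        rw [h, htx, Algebra.smul_def, Algebra.smul_def]; ring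
      exact mul_left_cancel₀ hx0 this
    right
    constructor
    · rw [htx, span_singleton_smul_eq (hb0.isUnit) x]
    · rw [hyz, span_singleton_smul_eq (hb0.isUnit) z]
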